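/- Let A ∈ ℝ^{m×n} and A^Z = [A | −A𝟙]. Then the smallest nonzero eigenvalue satisfies λ_min⁺((A^Z)ᵀ A^Z) ≥ λ_min⁺(Aᵀ A)/(n+1). -/

import Mathlib

open Matrix

/-- The matrix `A^Z = [A | −A𝟙]`, i.e. `A` with an extra column `−A𝟙` appended. -/
noncomputable def appendNegRowSum {m n : ℕ} (A : Matrix (Fin m) (Fin n) ℝ) :
    Matrix (Fin m) (Fin n ⊕ Unit) ℝ :=
  Matrix.fromCols A (Matrix.of fun i (_ : Unit) => -(A *ᵥ 1) i)

/-- The smallest nonzero eigenvalue of a symmetric PSD matrix: the infimum of the Rayleigh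
quotient over unit vectors orthogonal to the null space. -/
noncomputable def lminPos {k : Type*} [Fintype k] (M : Matrix k k ℝ) : ℝ :=
  sInf {r : ℝ | ∃ x : k → ℝ, x ⬝ᵥ x = 1 ∧ (∀ y, M *ᵥ y = 0 → x ⬝ᵥ y = 0) ∧
    r = x ⬝ᵥ (M *ᵥ x)}

namespace Stmt10Aux

lemma inner_dot {ι : Type*} [Fintype ι] (x y : EuclideanSpace ℝ ι) :
    (inner ℝ x y : ℝ) = (x : ι → ℝ) ⬝ᵥ (y : ι → ℝ) := by
  simp [PiLp.inner_apply, dotProduct, mul_comm]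

/-- Orthogonal decomposition of any vector into `range Mᵀ` plus a kernel part. -/
lemma decomp {m : ℕ} {ι : Type*} [Fintype ι] (M : Matrix (Fin m) ι ℝ) (w : ι → ℝ) :
    ∃ c q, w = Mᵀ *ᵥ c + q ∧ M *ᵥ q = 0 ∧ ∀ d, (Mᵀ *ᵥ d) ⬝ᵥ q = 0 := by
  let T : EuclideanSpace ℝ (Fin m) →ₗ[ℝ] EuclideanSpace ℝ ι :=
    { toFun := fun c => WithLp.toLp 2 (Mᵀ *ᵥ c)
      map_add' := fun a b => by ext; simp [Matrix.mulVec_add]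
      map_smul' := fun r a => by ext; simp [Matrix.mulVec_smul] }
  let K : Submodule ℝ (EuclideanSpace ℝ ι) := LinearMap.range T
  obtain ⟨p, hp, q, hq, hw⟩ := K.exists_add_mem_mem_orthogonal (WithLp.toLp 2 w)
  obtain ⟨c, hc⟩ := hp
  have hdq : ∀ d, (Mᵀ *ᵥ d) ⬝ᵥ q = 0 := by
    intro d
    have h := (Submodule.mem_orthogonal K q).mp hq (T (WithLp.toLp 2 d)) (LinearMap.mem_range_self T (WithLp.toLp 2 d))
    rw [inner_dot] at h
    exact h
  have hMq : M *ᵥ q = 0 := by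
    rw [← dotProduct_self_eq_zero (v := M *ᵥ q)]
    have := hdq (M *ᵥ q)
    rwa [Matrix.mulVec_transpose, ← Matrix.dotProduct_mulVec] at this
  exact ⟨c.ofLp, q.ofLp, by rw [← hc] at hw; exact congrArg WithLp.ofLp hw, hMq, hdq⟩

lemma H4 {m : ℕ} {ι : Type*} [Fintype ι] (B : Matrix (Fin m) ι ℝ) (c : Fin m → ℝ) (y : ι → ℝ) :
    (Bᵀ *ᵥ c) ⬝ᵥ y = c ⬝ᵥ (B *ᵥ y) := by
  rw [Matrix.mulVec_transpose, ← Matrix.dotProduct_mulVec]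

lemma H1 {m : ℕ} {ι : Type*} [Fintype ι] (B : Matrix (Fin m) ι ℝ) (x : ι → ℝ) :
    x ⬝ᵥ ((Bᵀ * B) *ᵥ x) = (B *ᵥ x) ⬝ᵥ (B *ᵥ x) := by
  rw [← Matrix.mulVec_mulVec, dotProduct_comm, H4]

lemma dself_nonneg {ι : Type*} [Fintype ι] (v : ι → ℝ) : 0 ≤ v ⬝ᵥ v :=
  Finset.sum_nonneg fun _ _ => mul_self_nonneg _

lemma H3 {m : ℕ} {ι : Type*} [Fintype ι] (B : Matrix (Fin m) ι ℝ) (y : ι → ℝ)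
    (h : (Bᵀ * B) *ᵥ y = 0) : B *ᵥ y = 0 := by
  rw [← dotProduct_self_eq_zero (v := B *ᵥ y), ← H1, h, dotProduct_zero]

lemma mem_set {m : ℕ} {ι : Type*} [Fintype ι] (B : Matrix (Fin m) ι ℝ) (d : Fin m → ℝ)
    (hp : Bᵀ *ᵥ d ≠ 0) :
    ∃ x : ι → ℝ, x ⬝ᵥ x = 1 ∧ (∀ y, (Bᵀ * B) *ᵥ y = 0 → x ⬝ᵥ y = 0) ∧
      x ⬝ᵥ ((Bᵀ * B) *ᵥ x) = ((Bᵀ *ᵥ d) ⬝ᵥ (Bᵀ *ᵥ d))⁻¹ *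
        ((B *ᵥ (Bᵀ *ᵥ d)) ⬝ᵥ (B *ᵥ (Bᵀ *ᵥ d))) := by
  set p := Bᵀ *ᵥ d with hpdef
  have hP : 0 < p ⬝ᵥ p :=
    lt_of_le_of_ne (dself_nonneg p) (fun h => hp (dotProduct_self_eq_zero.mp h.symm))
  have hs : Real.sqrt (p ⬝ᵥ p) * Real.sqrt (p ⬝ᵥ p) = p ⬝ᵥ p := Real.mul_self_sqrt hP.le
  have hs0 : Real.sqrt (p ⬝ᵥ p) ≠ 0 := by positivity
  refine ⟨(Real.sqrt (p ⬝ᵥ p))⁻¹ • p, ?_, ?_, ?_⟩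
  · rw [smul_dotProduct, dotProduct_smul, smul_eq_mul, smul_eq_mul]
    field_simp
    rw [Real.sq_sqrt hP.le]
  · intro y hy
    have hBy := H3 B y hy
    have hpy : p ⬝ᵥ y = 0 := by rw [hpdef, H4, hBy, dotProduct_zero]
    rw [smul_dotProduct, smul_eq_mul, hpy, mul_zero]
  · rw [H1, Matrix.mulVec_smul, smul_dotProduct, dotProduct_smul, smul_eq_mul, smul_eq_mul,
      ← mul_assoc, ← mul_inv, hs]

lemma Zt {m n : ℕ} (A : Matrix (Fin m) (Fin n) ℝ) (c : Fin m → ℝ) :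
    (appendNegRowSum A)ᵀ *ᵥ c = Sum.elim (Aᵀ *ᵥ c) (fun _ => -(∑ j, (Aᵀ *ᵥ c) j)) := by
  rw [appendNegRowSum, transpose_fromCols, fromRows_mulVec]
  funext u
  cases u with
  | inl j => simp
  | inr _ =>
    simp only [Sum.elim_inr, Matrix.mulVec, dotProduct, Matrix.transpose_apply, Matrix.of_apply,
      neg_mul, Finset.sum_neg_distrib, neg_inj, Finset.sum_mul, Pi.one_apply, mul_one]
    show (∑ i : Fin m, ∑ j : Fin n, A i j * c i) = ∑ j : Fin n, ∑ i : Fin m, A i j * c i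
    rw [Finset.sum_comm]

lemma Zv {m n : ℕ} (A : Matrix (Fin m) (Fin n) ℝ) (u : Fin n → ℝ) (s : ℝ) :
    appendNegRowSum A *ᵥ Sum.elim u (fun _ => -s) = A *ᵥ (u + s • (1 : Fin n → ℝ)) := by
  rw [appendNegRowSum, fromCols_mulVec_sumElim, Matrix.mulVec_add, Matrix.mulVec_smul]
  congr 1
  funext i
  simp [Matrix.mulVec, dotProduct, mul_comm]

lemma lminPos_le {m : ℕ} {ι : Type*} [Fintype ι] (B : Matrix (Fin m) ι ℝ) {x : ι → ℝ}
    (h1 : x ⬝ᵥ x = 1) (h2 : ∀ y, (Bᵀ * B) *ᵥ y = 0 → x ⬝ᵥ y = 0) :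
    lminPos (Bᵀ * B) ≤ x ⬝ᵥ ((Bᵀ * B) *ᵥ x) := by
  unfold lminPos
  refine csInf_le ⟨0, ?_⟩ ⟨x, h1, h2, rfl⟩
  rintro r ⟨v, -, -, rfl⟩
  rw [H1]
  exact dself_nonneg _

lemma lminPos_nonneg {m : ℕ} {ι : Type*} [Fintype ι] (B : Matrix (Fin m) ι ℝ) :
    0 ≤ lminPos (Bᵀ * B) := by
  unfold lminPos
  refine Real.sInf_nonneg ?_
  rintro r ⟨v, -, -, rfl⟩
  rw [H1]
  exact dself_nonneg _

end Stmt10Aux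

open Stmt10Aux in
/-- `λ_min⁺((A^Z)ᵀ A^Z) ≥ λ_min⁺(Aᵀ A)/(n+1)` where `A^Z = [A | −A𝟙]` and `A ≠ 0`. -/
theorem stmt10 {m n : ℕ} (A : Matrix (Fin m) (Fin n) ℝ) (hA : A ≠ 0) :
    lminPos (Aᵀ * A) / ((n : ℝ) + 1) ≤
      lminPos ((appendNegRowSum A)ᵀ * appendNegRowSum A) := by
  set AZ := appendNegRowSum A with hAZdef
  -- the set defining the RHS
  set SZ : Set ℝ := {r : ℝ | ∃ x : (Fin n ⊕ Unit) → ℝ, x ⬝ᵥ x = 1 ∧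
      (∀ y, (AZᵀ * AZ) *ᵥ y = 0 → x ⬝ᵥ y = 0) ∧ r = x ⬝ᵥ ((AZᵀ * AZ) *ᵥ x)} with hSZdef
  have hRHS : lminPos (AZᵀ * AZ) = sInf SZ := rfl
  -- SZ is nonempty
  have hne : SZ.Nonempty := by
    obtain ⟨i0, j0, hA0⟩ : ∃ i j, A i j ≠ 0 := by
      by_contra h
      push_neg at h
      exact hA (by ext i j; simpa using h i j)
    have hv : AZᵀ *ᵥ Pi.single i0 1 ≠ 0 := by
      intro h
      have h2 := congrFun h (Sum.inl j0)
      rw [hAZdef, Zt] at h2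
      simp only [Sum.elim_inl, Pi.zero_apply] at h2
      apply hA0
      have : (Aᵀ *ᵥ Pi.single i0 1) j0 = A i0 j0 := by
        simp [Matrix.mulVec, dotProduct, Pi.single_apply]
      rw [this] at h2
      exact h2
    obtain ⟨x, hx1, hx2, -⟩ := mem_set AZ (Pi.single i0 1) hv
    exact ⟨x ⬝ᵥ ((AZᵀ * AZ) *ᵥ x), x, hx1, hx2, rfl⟩
  -- main bound: every element of SZ dominates lminPos (Aᵀ * A)
  have key : ∀ r ∈ SZ, lminPos (Aᵀ * A) ≤ r := by
    rintro r ⟨z, hz1, hzorth, hzr⟩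
    obtain ⟨c, q, hzdec, hAZq, hdq⟩ := decomp AZ z
    have hq0 : q = 0 := by
      rw [← dotProduct_self_eq_zero (v := q)]
      have hzq : z ⬝ᵥ q = 0 := hzorth q (by rw [← Matrix.mulVec_mulVec, hAZq, Matrix.mulVec_zero])
      have h1 : (AZᵀ *ᵥ c) ⬝ᵥ q = 0 := hdq c
      have h2 : z ⬝ᵥ q = (AZᵀ *ᵥ c) ⬝ᵥ q + q ⬝ᵥ q := by rw [hzdec, add_dotProduct]
      linarith
    have hz : z = AZᵀ *ᵥ c := by rw [hzdec, hq0, add_zero]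
    set u : Fin n → ℝ := Aᵀ *ᵥ c with hudef
    set s : ℝ := ∑ j, u j with hsdef
    have hzS : z = Sum.elim u (fun _ => -s) := by rw [hz, hAZdef, Zt]
    -- unit norm identity
    have h1 : u ⬝ᵥ u + s ^ 2 = 1 := by
      rw [← hz1, hzS]
      simp only [dotProduct, Fintype.sum_sum_type, Sum.elim_inl, Sum.elim_inr,
        Finset.univ_unique, Finset.sum_singleton]
      ring
    set w : Fin n → ℝ := u + s • (1 : Fin n → ℝ) with hwdef2
    have hr : r = (A *ᵥ w) ⬝ᵥ (A *ᵥ w) := by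
      rw [hzr, H1, hzS, hAZdef, Zv]
    have hr0 : 0 ≤ r := hr ▸ dself_nonneg _
    -- decompose w
    obtain ⟨d, q', hwdec, hAq', hdq'⟩ := decomp A w
    set p : Fin n → ℝ := Aᵀ *ᵥ d with hpdef
    have hpq' : p ⬝ᵥ q' = 0 := hdq' d
    have huq' : u ⬝ᵥ q' = 0 := hdq' c
    have hone : (1 : Fin n → ℝ) ⬝ᵥ (1 : Fin n → ℝ) = (n : ℝ) := by
      simp [dotProduct]
    have hu1 : u ⬝ᵥ (1 : Fin n → ℝ) = s := by
      simp [dotProduct, hsdef]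
    have hq'q' : q' ⬝ᵥ q' = s * ((1 : Fin n → ℝ) ⬝ᵥ q') := by
      have e1 : w ⬝ᵥ q' = p ⬝ᵥ q' + q' ⬝ᵥ q' := by rw [hwdec, add_dotProduct]
      have e2 : w ⬝ᵥ q' = u ⬝ᵥ q' + s * ((1 : Fin n → ℝ) ⬝ᵥ q') := by
        rw [hwdef2, add_dotProduct, smul_dotProduct, smul_eq_mul]
      linarith
    have hCS : ((1 : Fin n → ℝ) ⬝ᵥ q') ^ 2 ≤ (n : ℝ) * (q' ⬝ᵥ q') := by
      have := Finset.sum_mul_sq_le_sq_mul_sq Finset.univ (fun _ => (1 : ℝ)) q'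
      simp only [one_mul, one_pow, Finset.sum_const, Finset.card_univ, Fintype.card_fin,
        nsmul_eq_mul, mul_one] at this
      calc ((1 : Fin n → ℝ) ⬝ᵥ q') ^ 2 = (∑ i, q' i) ^ 2 := by simp [dotProduct]
        _ ≤ (n : ℝ) * ∑ i, q' i ^ 2 := this
        _ = (n : ℝ) * (q' ⬝ᵥ q') := by simp [dotProduct, sq]
    have hq'le : q' ⬝ᵥ q' ≤ (n : ℝ) * s ^ 2 := by
      have h2 : (q' ⬝ᵥ q') ^ 2 ≤ s ^ 2 * ((n : ℝ) * (q' ⬝ᵥ q')) := by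
        calc (q' ⬝ᵥ q') ^ 2 = s ^ 2 * ((1 : Fin n → ℝ) ⬝ᵥ q') ^ 2 := by rw [hq'q']; ring
          _ ≤ s ^ 2 * ((n : ℝ) * (q' ⬝ᵥ q')) :=
            mul_le_mul_of_nonneg_left hCS (sq_nonneg s)
      by_cases hQ : q' ⬝ᵥ q' = 0
      · rw [hQ]; positivity
      · have hQpos : 0 < q' ⬝ᵥ q' := lt_of_le_of_ne (dself_nonneg q') (Ne.symm hQ)
        have h3 : (q' ⬝ᵥ q') * (q' ⬝ᵥ q') ≤ ((n : ℝ) * s ^ 2) * (q' ⬝ᵥ q') := by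
          calc (q' ⬝ᵥ q') * (q' ⬝ᵥ q') = (q' ⬝ᵥ q') ^ 2 := by ring
            _ ≤ s ^ 2 * ((n : ℝ) * (q' ⬝ᵥ q')) := h2
            _ = ((n : ℝ) * s ^ 2) * (q' ⬝ᵥ q') := by ring
        exact le_of_mul_le_mul_right h3 hQpos
    have hww : w ⬝ᵥ w = u ⬝ᵥ u + 2 * s ^ 2 + (n : ℝ) * s ^ 2 := by
      rw [hwdef2, add_dotProduct, dotProduct_add, dotProduct_add, dotProduct_smul,
        smul_dotProduct, smul_dotProduct, dotProduct_smul, smul_eq_mul, smul_eq_mul,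
        smul_eq_mul, smul_eq_mul, hone, hu1, dotProduct_comm (1 : Fin n → ℝ) u, hu1]
      ring
    have hwpq : w ⬝ᵥ w = p ⬝ᵥ p + q' ⬝ᵥ q' := by
      rw [hwdec, add_dotProduct, dotProduct_add, dotProduct_add, hpq',
        dotProduct_comm q' p, hpq']
      ring
    have hP1 : 1 ≤ p ⬝ᵥ p := by nlinarith [sq_nonneg s]
    have hp0 : p ≠ 0 := by
      intro h
      rw [h, zero_dotProduct] at hP1
      linarith
    have hAp : A *ᵥ p = A *ᵥ w := by
      rw [hwdec, Matrix.mulVec_add, hAq', add_zero]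
    obtain ⟨x, hx1, hxorth, hxval⟩ := mem_set A d (hpdef ▸ hp0)
    have hle : lminPos (Aᵀ * A) ≤ x ⬝ᵥ ((Aᵀ * A) *ᵥ x) := lminPos_le A hx1 hxorth
    rw [hxval] at hle
    rw [← hpdef] at hle
    rw [hAp, ← hr] at hle
    have hinv : (p ⬝ᵥ p)⁻¹ ≤ 1 := inv_le_one_of_one_le₀ hP1
    have hfin : (p ⬝ᵥ p)⁻¹ * r ≤ r := by nlinarith
    linarith
  have hnn : 0 ≤ lminPos (Aᵀ * A) := lminPos_nonneg A
  have hdiv : lminPos (Aᵀ * A) / ((n : ℝ) + 1) ≤ lminPos (Aᵀ * A) :=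
    div_le_self hnn (by linarith [Nat.cast_nonneg (α := ℝ) n])
  refine le_trans hdiv ?_
  rw [hRHS]
  exact le_csInf hne fun r hr => key r hr
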